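/- For every α with 0 < α < 1, every r > 0 and every w ∈ ℂ: (1/2π) ∫₀^{2π} dθ / |r e^{2iθ} − w|^α ≤ 1/((1−α) r^α). -/

import Mathlib

open Complex Real MeasureTheory Set intervalIntegral

noncomputable def Fsin (α : ℝ) : ℝ → ℝ := fun u => |Real.sin u| ^ (-α)

lemma Fsin_per (α : ℝ) : Function.Periodic (Fsin α) π := fun x => by
  simp [Fsin, Real.sin_add_pi]

lemma Fsin_meas (α : ℝ) : Measurable (Fsin α) :=
  by unfold Fsin; fun_prop

lemma Fsin_nonneg (α : ℝ) (u : ℝ) : 0 ≤ Fsin α u := Real.rpow_nonneg (abs_nonneg _) _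

lemma Fsin_int_half {α : ℝ} (h0 : 0 < α) (h1 : α < 1) :
    IntervalIntegrable (Fsin α) volume 0 (π / 2) := by
  have hα : (-1 : ℝ) < -α := by linarith
  have hg : IntervalIntegrable (fun u : ℝ => (2 / π) ^ (-α) * u ^ (-α)) volume 0 (π / 2) :=
    (intervalIntegrable_rpow' hα).const_mul _
  apply hg.mono_fun' ((Fsin_meas α).aestronglyMeasurable)
  rw [Set.uIoc_of_le (by positivity : (0 : ℝ) ≤ π / 2)]
  filter_upwards [ae_restrict_mem measurableSet_Ioc] with u hu
  have hu0 : 0 < u := hu.1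
  have hsin : 2 / π * u ≤ |Real.sin u| := (Real.mul_le_sin hu0.le hu.2).trans (le_abs_self _)
  rw [Real.norm_eq_abs, _root_.abs_of_nonneg (Fsin_nonneg α u)]
  calc Fsin α u ≤ (2 / π * u) ^ (-α) :=
        Real.rpow_le_rpow_of_nonpos (by positivity) hsin (by linarith)
    _ = (2 / π) ^ (-α) * u ^ (-α) := Real.mul_rpow (by positivity) hu0.le

lemma Fsin_refl (α : ℝ) : (fun x => Fsin α (π - x)) = Fsin α :=
  funext fun x => by simp [Fsin, Real.sin_pi_sub]

lemma Fsin_int_pi {α : ℝ} (h0 : 0 < α) (h1 : α < 1) :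
    IntervalIntegrable (Fsin α) volume 0 π := by
  have h2 := (Fsin_int_half h0 h1).comp_sub_left π
  rw [Fsin_refl α] at h2
  have e1 : π - 0 = π := by ring
  have e2 : π - π / 2 = π / 2 := by ring
  rw [e1, e2] at h2
  exact (Fsin_int_half h0 h1).trans h2.symm

lemma Fsin_int_all {α : ℝ} (h0 : 0 < α) (h1 : α < 1) (a b : ℝ) :
    IntervalIntegrable (Fsin α) volume a b := by
  have hstep : ∀ n : ℤ, IntervalIntegrable (Fsin α) volume (n * π) (n * π + π) := by
    intro n
    have h := (Fsin_int_pi h0 h1).comp_sub_right (n * π)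
    have he : (fun x => Fsin α (x - n * π)) = Fsin α := funext fun x => by
      simpa [zsmul_eq_mul] using (Fsin_per α).sub_zsmul_eq n (x := x)
    rw [he, zero_add, add_comm] at h
    exact h
  have hmono : ∀ n m : ℤ, n ≤ m →
      IntervalIntegrable (Fsin α) volume (n * π) (m * π) := by
    intro n m h
    refine Int.le_induction (motive := fun m _ => IntervalIntegrable (Fsin α) volume (n * π) (m * π)) ?_ ?_ m h
    · exact IntervalIntegrable.refl
    · intro m hm ih
      have h' := ih.trans (hstep m)
      have he : ((m : ℝ) + 1) * π = m * π + π := by ring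
      push_cast
      rw [he]
      exact h'
  have key : ∀ a b : ℝ, a ≤ b → IntervalIntegrable (Fsin α) volume a b := by
    intro a b hab
    have h1' : (⌊a / π⌋ : ℝ) * π ≤ a := by
      have := mul_le_mul_of_nonneg_right (Int.floor_le (a / π)) Real.pi_pos.le
      rwa [div_mul_cancel₀ a Real.pi_ne_zero] at this
    have h2' : b ≤ (⌈b / π⌉ : ℝ) * π := by
      have := mul_le_mul_of_nonneg_right (Int.le_ceil (b / π)) Real.pi_pos.le
      rwa [div_mul_cancel₀ b Real.pi_ne_zero] at this
    have hnm : (⌊a / π⌋ : ℤ) ≤ ⌈b / π⌉ := by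
      have h3 : (⌊a / π⌋ : ℝ) * π ≤ (⌈b / π⌉ : ℝ) * π := h1'.trans (hab.trans h2')
      have := le_of_mul_le_mul_right h3 Real.pi_pos
      exact_mod_cast this
    refine (hmono _ _ hnm).mono_set ?_
    rw [Set.uIcc_of_le hab, Set.uIcc_of_le (h1'.trans (hab.trans h2'))]
    exact Set.Icc_subset_Icc h1' h2'
  rcases le_total a b with hab | hab
  · exact key a b hab
  · exact (key b a hab).symm

lemma Fsin_integral_half_le {α : ℝ} (h0 : 0 < α) (h1 : α < 1) :
    ∫ x in (0 : ℝ)..(π / 2), Fsin α x ≤ (π / 2) / (1 - α) := by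
  have hα : (-1 : ℝ) < -α := by linarith
  have hg : IntervalIntegrable (fun u : ℝ => (2 / π) ^ (-α) * u ^ (-α)) volume 0 (π / 2) :=
    (intervalIntegrable_rpow' hα).const_mul _
  have hm : ∫ x in (0 : ℝ)..(π / 2), Fsin α x
      ≤ ∫ x in (0 : ℝ)..(π / 2), (2 / π) ^ (-α) * x ^ (-α) := by
    apply intervalIntegral.integral_mono_on (by positivity) (Fsin_int_half h0 h1) hg
    intro x hx
    rcases eq_or_lt_of_le hx.1 with rfl | hx0
    · have : Fsin α 0 = 0 := by simp [Fsin, Real.zero_rpow (by linarith : -α ≠ 0)]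
      rw [this]
      positivity
    · have hsin : 2 / π * x ≤ |Real.sin x| := (Real.mul_le_sin hx0.le hx.2).trans (le_abs_self _)
      calc Fsin α x ≤ (2 / π * x) ^ (-α) :=
            Real.rpow_le_rpow_of_nonpos (by positivity) hsin (by linarith)
        _ = (2 / π) ^ (-α) * x ^ (-α) := Real.mul_rpow (by positivity) hx0.le
  rw [intervalIntegral.integral_const_mul, integral_rpow (Or.inl hα)] at hm
  have h0' : (0 : ℝ) ^ (-α + 1) = 0 := Real.zero_rpow (by linarith)
  rw [h0', sub_zero] at hm
  refine hm.trans (le_of_eq ?_)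
  have hc : (2 / π : ℝ) ^ (-α) = (π / 2) ^ α := by
    rw [Real.rpow_neg (by positivity), ← Real.inv_rpow (by positivity), inv_div]
  rw [hc, ← mul_div_assoc, ← Real.rpow_add (by positivity : (0:ℝ) < π / 2),
    show α + (-α + 1) = 1 by ring, Real.rpow_one, show -α + 1 = 1 - α by ring]

lemma Fsin_integral_pi_le {α : ℝ} (h0 : 0 < α) (h1 : α < 1) :
    ∫ x in (0 : ℝ)..π, Fsin α x ≤ π / (1 - α) := by
  have hrefl : ∫ x in (π / 2)..π, Fsin α x = ∫ x in (0 : ℝ)..(π / 2), Fsin α x := by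
    have h := intervalIntegral.integral_comp_sub_left (a := 0) (b := π / 2) (Fsin α) π
    rw [show (fun x => Fsin α (π - x)) = Fsin α from Fsin_refl α] at h
    · rw [show π - π / 2 = π / 2 by ring, sub_zero] at h
      exact h.symm
  rw [← intervalIntegral.integral_add_adjacent_intervals (Fsin_int_half h0 h1)
    (Fsin_int_all h0 h1 (π / 2) π), hrefl]
  have h2 := Fsin_integral_half_le h0 h1
  have h3 : (π / 2) / (1 - α) + (π / 2) / (1 - α) = π / (1 - α) := by ring
  linarith

lemma sin_lower_bound (r : ℝ) (hr : 0 ≤ r) (ψ : ℝ) (w : ℂ) :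
    r * |Real.sin (ψ - Complex.arg w)| ≤ ‖(r : ℂ) * Complex.exp (ψ * I) - w‖ := by
  set φ := Complex.arg w with hφ
  have hw : (‖w‖ : ℂ) * Complex.exp (φ * I) = w := Complex.norm_mul_exp_arg_mul_I w
  have e1 : Complex.exp ((φ : ℂ) * I) * Complex.exp (((ψ - φ : ℝ) : ℂ) * I)
      = Complex.exp ((ψ : ℂ) * I) := by
    rw [← Complex.exp_add]
    congr 1
    push_cast
    ring
  have key : (r : ℂ) * Complex.exp ((ψ : ℂ) * I) - w
      = Complex.exp ((φ : ℂ) * I)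
        * ((r : ℂ) * Complex.exp (((ψ - φ : ℝ) : ℂ) * I) - (‖w‖ : ℂ)) := by
    have : Complex.exp ((φ : ℂ) * I)
        * ((r : ℂ) * Complex.exp (((ψ - φ : ℝ) : ℂ) * I) - (‖w‖ : ℂ))
        = (r : ℂ) * (Complex.exp ((φ : ℂ) * I) * Complex.exp (((ψ - φ : ℝ) : ℂ) * I))
          - (‖w‖ : ℂ) * Complex.exp ((φ : ℂ) * I) := by ring
    rw [this, e1, hw]
  have him : ((r : ℂ) * Complex.exp (((ψ - φ : ℝ) : ℂ) * I) - (‖w‖ : ℂ)).im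
      = r * Real.sin (ψ - φ) := by
    rw [Complex.sub_im, Complex.ofReal_im, sub_zero, Complex.mul_im, Complex.ofReal_re,
      Complex.ofReal_im, zero_mul, add_zero, Complex.exp_ofReal_mul_I_im]
  calc r * |Real.sin (ψ - φ)|
      = |((r : ℂ) * Complex.exp (((ψ - φ : ℝ) : ℂ) * I) - (‖w‖ : ℂ)).im| := by
        rw [him, abs_mul, _root_.abs_of_nonneg hr]
    _ ≤ ‖(r : ℂ) * Complex.exp (((ψ - φ : ℝ) : ℂ) * I) - (‖w‖ : ℂ)‖ :=
        Complex.abs_im_le_norm _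
    _ = ‖(r : ℂ) * Complex.exp ((ψ : ℂ) * I) - w‖ := by
        rw [key, norm_mul, Complex.norm_exp_ofReal_mul_I, one_mul]

/-- For `0 < α < 1`, `r > 0` and any `w ∈ ℂ`:
`(1/2π) ∫₀^{2π} dθ/|re^{2iθ} − w|^α ≤ 1/((1−α) r^α)`. -/
theorem circle_integral_inverse_abs_estimate
    (α : ℝ) (h0 : 0 < α) (h1 : α < 1) (r : ℝ) (hr : 0 < r) (w : ℂ) :
    (1 / (2 * π)) * ∫ θ in (0 : ℝ)..(2 * π),
        (‖(r : ℂ) * Complex.exp (2 * θ * I) - w‖ ^ α)⁻¹ ≤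
      1 / ((1 - α) * r ^ α) := by
  set φ := Complex.arg w with hφ
  have hNnull : volume {θ : ℝ | Real.sin (2 * θ - φ) = 0} = 0 := by
    apply Set.Countable.measure_zero
    have hsub : {θ : ℝ | Real.sin (2 * θ - φ) = 0}
        ⊆ Set.range fun n : ℤ => ((n : ℝ) * π + φ) / 2 := by
      intro θ hθ
      obtain ⟨n, hn⟩ := Real.sin_eq_zero_iff.mp hθ
      refine ⟨n, ?_⟩
      show ((n : ℝ) * π + φ) / 2 = θ
      rw [hn]; ring
    exact (Set.countable_range _).mono hsub
  have hNae : ∀ᵐ θ : ℝ, Real.sin (2 * θ - φ) ≠ 0 := by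
    rw [ae_iff]
    simpa [not_not] using hNnull
  have hae : ∀ᵐ θ : ℝ, (‖(r : ℂ) * Complex.exp (2 * θ * I) - w‖ ^ α)⁻¹
      ≤ (r ^ α)⁻¹ * Fsin α (2 * θ - φ) := by
    filter_upwards [hNae] with θ hθ
    have hA := sin_lower_bound r hr.le (2 * θ) w
    rw [← hφ] at hA
    push_cast at hA
    have hs0 : 0 < |Real.sin (2 * θ - φ)| := abs_pos.mpr hθ
    have hrs : 0 < r * |Real.sin (2 * θ - φ)| := by positivity
    have h1' : (r * |Real.sin (2 * θ - φ)|) ^ α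
        ≤ ‖(r : ℂ) * Complex.exp (2 * θ * I) - w‖ ^ α :=
      Real.rpow_le_rpow hrs.le hA h0.le
    have h2' : 0 < (r * |Real.sin (2 * θ - φ)|) ^ α := Real.rpow_pos_of_pos hrs α
    calc (‖(r : ℂ) * Complex.exp (2 * θ * I) - w‖ ^ α)⁻¹
        ≤ ((r * |Real.sin (2 * θ - φ)|) ^ α)⁻¹ := inv_anti₀ h2' h1'
      _ = (r ^ α)⁻¹ * Fsin α (2 * θ - φ) := by
          rw [Real.mul_rpow hr.le (abs_nonneg _), mul_inv]
          congr 1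
          simp [Fsin, Real.rpow_neg (abs_nonneg _)]
  have hG : ∀ a b : ℝ, IntervalIntegrable (fun x => Fsin α (x - φ)) volume a b := by
    intro a b
    have h := (Fsin_int_all h0 h1 (a - φ) (b - φ)).comp_sub_right φ
    rwa [sub_add_cancel, sub_add_cancel] at h
  have hcomp : IntervalIntegrable (fun θ => Fsin α (2 * θ - φ)) volume 0 (2 * π) := by
    have h := (hG 0 (4 * π)).comp_mul_left (c := 2)
    simpa only [zero_div, show (4 : ℝ) * π / 2 = 2 * π by ring] using h
  have hg : IntervalIntegrable (fun θ => (r ^ α)⁻¹ * Fsin α (2 * θ - φ)) volume 0 (2 * π) :=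
    hcomp.const_mul _
  have hmeas : Measurable (fun θ : ℝ =>
      (‖(r : ℂ) * Complex.exp (2 * θ * I) - w‖ ^ α)⁻¹) := by
    have hc : Continuous fun θ : ℝ => ‖(r : ℂ) * Complex.exp (2 * θ * I) - w‖ := by
      apply continuous_norm.comp
      fun_prop
    have h2 : Measurable fun x : ℝ => (x ^ α)⁻¹ := by fun_prop
    exact h2.comp hc.measurable
  have hint : IntervalIntegrable
      (fun θ => (‖(r : ℂ) * Complex.exp (2 * θ * I) - w‖ ^ α)⁻¹)
      volume 0 (2 * π) := by
    apply hg.mono_fun' hmeas.aestronglyMeasurable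
    apply ae_restrict_of_ae
    filter_upwards [hae] with θ hθ
    rw [Real.norm_eq_abs, _root_.abs_of_nonneg
      (inv_nonneg.mpr (Real.rpow_nonneg (norm_nonneg _) _))]
    exact hθ
  have hmono := intervalIntegral.integral_mono_ae
    (by positivity : (0 : ℝ) ≤ 2 * π) hint hg hae
  have hval : ∫ θ in (0 : ℝ)..(2 * π), Fsin α (2 * θ - φ) ≤ 2 * π / (1 - α) := by
    have h1c : ∫ θ in (0 : ℝ)..(2 * π), Fsin α (2 * θ - φ)
        = 2⁻¹ * ∫ x in (0 : ℝ)..(4 * π), Fsin α (x - φ) := by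
      have h := intervalIntegral.integral_comp_mul_left (a := 0) (b := 2 * π)
        (fun x => Fsin α (x - φ)) (two_ne_zero)
      rw [mul_zero, show (2 : ℝ) * (2 * π) = 4 * π by ring, smul_eq_mul] at h
      exact h
    have h2c : ∫ x in (0 : ℝ)..(4 * π), Fsin α (x - φ)
        = ∫ x in (-φ)..(4 * π - φ), Fsin α x := by
      simpa using intervalIntegral.integral_comp_sub_right (a := 0) (b := 4 * π) (Fsin α) φ
    have h3c : ∫ x in (-φ)..(4 * π - φ), Fsin α x = 4 * ∫ x in (0 : ℝ)..π, Fsin α x := by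
      have hz := (Fsin_per α).intervalIntegral_add_zsmul_eq 4 (-φ) (Fsin_int_all h0 h1)
      have hsh := (Fsin_per α).intervalIntegral_add_eq (-φ) 0
      rw [show -φ + (4 : ℤ) • π = 4 * π - φ by rw [zsmul_eq_mul]; push_cast; ring] at hz
      rw [hsh, zero_add] at hz
      rw [hz, zsmul_eq_mul]
      norm_num
    rw [h1c, h2c, h3c]
    have h4 := Fsin_integral_pi_le h0 h1
    have h5 : (0:ℝ) < 1 - α := by linarith
    calc 2⁻¹ * (4 * ∫ x in (0 : ℝ)..π, Fsin α x) = 2 * ∫ x in (0 : ℝ)..π, Fsin α x := by ring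
      _ ≤ 2 * (π / (1 - α)) := by linarith
      _ = 2 * π / (1 - α) := by ring
  have hfinal : (∫ θ in (0 : ℝ)..(2 * π),
      (‖(r : ℂ) * Complex.exp (2 * θ * I) - w‖ ^ α)⁻¹)
      ≤ (r ^ α)⁻¹ * (2 * π / (1 - α)) := by
    refine hmono.trans ?_
    rw [intervalIntegral.integral_const_mul]
    exact mul_le_mul_of_nonneg_left hval (by positivity)
  have hπ : (0 : ℝ) < π := Real.pi_pos
  have hrα : (0 : ℝ) < r ^ α := Real.rpow_pos_of_pos hr α
  have h5 : (0:ℝ) < 1 - α := by linarith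
  calc (1 / (2 * π)) * ∫ θ in (0 : ℝ)..(2 * π),
        (‖(r : ℂ) * Complex.exp (2 * θ * I) - w‖ ^ α)⁻¹
      ≤ (1 / (2 * π)) * ((r ^ α)⁻¹ * (2 * π / (1 - α))) :=
        mul_le_mul_of_nonneg_left hfinal (by positivity)
    _ = 1 / ((1 - α) * r ^ α) := by
        field_simp
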